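/- Let γ = 0 and d = 0. For every L > 0 the equation L = (π − arccos(1−h)) / √(2h) has a unique solution h ∈ (0,2), and there is a unique pinned fluxon φ_pin for parameters (L, 0, 0). Explicitly, letting x* ∈ ℝ be such that φ₀(−L + x*) = arccos(1−h), the pinned fluxon is given by φ_pin(x) = φ₀(x + x*) for x ≤ −L, φ_pin(x) = π + ((π − arccos(1−h))/L) · x for |x| ≤ L, and φ_pin(x) = φ₀(x − x*) for x ≥ L. -/

import Mathlib

set_option maxHeartbeats 1000000


open Real Filter Topology

/-- The piecewise-constant Josephson tunneling critical current:
`D(x) = d` for `|x| < L` and `D(x) = 1` for `|x| > L`. -/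
noncomputable def Dfun (L d : ℝ) (x : ℝ) : ℝ := if |x| < L then d else 1

/-- A pinned fluxon for parameters `(L, d, γ)`. -/
def IsPinnedFluxon (L d γ : ℝ) (φ : ℝ → ℝ) : Prop :=
  ContDiff ℝ 1 φ ∧
  (∀ x : ℝ, x ≠ -L → x ≠ L →
    ∃ φ'' : ℝ, HasDerivAt (deriv φ) φ'' x ∧
      φ'' - Dfun L d x * Real.sin (φ x) + γ = 0) ∧
  Tendsto φ atBot (𝓝 (Real.arcsin γ)) ∧
  Tendsto φ atTop (𝓝 (Real.arcsin γ + 2 * π)) ∧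
  Tendsto (deriv φ) atBot (𝓝 0) ∧
  Tendsto (deriv φ) atTop (𝓝 0)

/-- The stationary sine-Gordon fluxon `φ₀(ξ) = 4 arctan(e^ξ)`. -/
noncomputable def φ₀ (ξ : ℝ) : ℝ := 4 * Real.arctan (Real.exp ξ)

section Aux
open Set


noncomputable def SGp (ξ : ℝ) : ℝ := 4 * Real.exp ξ / (1 + Real.exp ξ ^ 2)

lemma SGp_pos (ξ : ℝ) : 0 < SGp ξ := by
  have h := Real.exp_pos ξ
  unfold SGp; positivity

lemma hasDerivAt_φ₀ (ξ : ℝ) : HasDerivAt φ₀ (SGp ξ) ξ := by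
  have h1 : HasDerivAt (fun ξ : ℝ => Real.arctan (Real.exp ξ))
      (1 / (1 + Real.exp ξ ^ 2) * Real.exp ξ) ξ :=
    (Real.hasDerivAt_arctan (Real.exp ξ)).comp ξ (Real.hasDerivAt_exp ξ)
  have := h1.const_mul (4 : ℝ)
  refine this.congr_deriv (Eq.symm ?_)
  unfold SGp
  field_simp

lemma sin_half_φ₀ (ξ : ℝ) : 2 * Real.sin (φ₀ ξ / 2) = SGp ξ := by
  have ht : Real.sqrt (1 + Real.exp ξ ^ 2) ^ 2 = 1 + Real.exp ξ ^ 2 := by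
    rw [Real.sq_sqrt]; positivity
  have hs : Real.sqrt (1 + Real.exp ξ ^ 2) > 0 := by
    apply Real.sqrt_pos.2; positivity
  have h2 : φ₀ ξ / 2 = 2 * Real.arctan (Real.exp ξ) := by unfold φ₀; ring
  rw [h2, Real.sin_two_mul, Real.sin_arctan, Real.cos_arctan]
  unfold SGp
  field_simp
  nlinarith [ht, hs]

lemma sin_φ₀ (ξ : ℝ) :
    Real.sin (φ₀ ξ) = 4 * Real.exp ξ * (1 - Real.exp ξ ^ 2) / (1 + Real.exp ξ ^ 2) ^ 2 := by
  have ht : Real.sqrt (1 + Real.exp ξ ^ 2) ^ 2 = 1 + Real.exp ξ ^ 2 := by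
    rw [Real.sq_sqrt]; positivity
  have hs : Real.sqrt (1 + Real.exp ξ ^ 2) > 0 := by
    apply Real.sqrt_pos.2; positivity
  have h2 : φ₀ ξ = 2 * (2 * Real.arctan (Real.exp ξ)) := by unfold φ₀; ring
  rw [h2, Real.sin_two_mul, Real.sin_two_mul, Real.cos_two_mul, Real.sin_arctan, Real.cos_arctan]
  have hden : (1 + Real.exp ξ ^ 2) ≠ 0 := by positivity
  field_simp
  rw [show Real.sqrt (1 + Real.exp ξ ^ 2) ^ 4 = (1 + Real.exp ξ ^ 2) ^ 2 by rw [show (4:ℕ) = 2 * 2 by norm_num, pow_mul, ht], ht]; ring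

lemma hasDerivAt_SGp (ξ : ℝ) : HasDerivAt SGp (Real.sin (φ₀ ξ)) ξ := by
  have hden : ∀ x : ℝ, (1 + Real.exp x ^ 2) ≠ 0 := fun x => by positivity
  have h1 : HasDerivAt (fun x : ℝ => 4 * Real.exp x) (4 * Real.exp ξ) ξ :=
    (Real.hasDerivAt_exp ξ).const_mul 4
  have h2 : HasDerivAt (fun x : ℝ => 1 + Real.exp x ^ 2) (2 * Real.exp ξ ^ 2) ξ := by
    have := ((Real.hasDerivAt_exp ξ).pow 2).const_add (1 : ℝ)
    refine this.congr_deriv (Eq.symm ?_)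
    ring
  have := h1.div h2 (hden ξ)
  refine this.congr_deriv (Eq.symm ?_)
  rw [sin_φ₀]
  field_simp
  ring



lemma φ₀_pos (ξ : ℝ) : 0 < φ₀ ξ := by
  have h : Real.arctan 0 < Real.arctan (Real.exp ξ) := Real.arctan_strictMono (Real.exp_pos ξ)
  rw [Real.arctan_zero] at h
  unfold φ₀; linarith

lemma φ₀_lt (ξ : ℝ) : φ₀ ξ < 2 * π := by
  have := Real.arctan_lt_pi_div_two (Real.exp ξ)
  unfold φ₀; linarith

lemma φ₀_strictMono : StrictMono φ₀ := by
  intro a b hab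
  unfold φ₀
  have := Real.arctan_strictMono (Real.exp_lt_exp.2 hab)
  linarith

lemma φ₀_surj {y : ℝ} (hy : y ∈ Ioo 0 (2 * π)) : ∃ ξ, φ₀ ξ = y := by
  have h1 : -(π/2) < y/4 := by nlinarith [hy.1, Real.pi_pos]
  have h2 : y/4 < π/2 := by nlinarith [hy.2]
  have h3 : 0 < Real.tan (y/4) := Real.tan_pos_of_pos_of_lt_pi_div_two (by nlinarith [hy.1]) h2
  refine ⟨Real.log (Real.tan (y/4)), ?_⟩
  unfold φ₀
  rw [Real.exp_log h3, Real.arctan_tan h1 h2]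
  ring

lemma φ₀_reflect (ξ : ℝ) : φ₀ (-ξ) = 2 * π - φ₀ ξ := by
  unfold φ₀
  rw [Real.exp_neg, Real.arctan_inv_of_pos (Real.exp_pos ξ)]
  ring

lemma SGp_reflect (ξ : ℝ) : SGp (-ξ) = SGp ξ := by
  unfold SGp
  rw [Real.exp_neg]
  have := (Real.exp_pos ξ).ne'
  field_simp
  ring

lemma φ₀_tendsto_atBot : Tendsto φ₀ atBot (𝓝 0) := by
  have h1 : Tendsto (fun ξ : ℝ => Real.arctan (Real.exp ξ)) atBot (𝓝 (Real.arctan 0)) :=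
    (Real.continuous_arctan.continuousAt).tendsto.comp Real.tendsto_exp_atBot
  rw [Real.arctan_zero] at h1
  have := h1.const_mul (4 : ℝ)
  simp at this; exact this

lemma φ₀_tendsto_atTop : Tendsto φ₀ atTop (𝓝 (2 * π)) := by
  have h1 : Tendsto (fun ξ : ℝ => Real.arctan (Real.exp ξ)) atTop (𝓝 (π/2)) :=
    (tendsto_nhds_of_tendsto_nhdsWithin Real.tendsto_arctan_atTop).comp Real.tendsto_exp_atTop
  have := h1.const_mul (4 : ℝ)
  have h2 : 4 * (π/2) = 2 * π := by ring
  rw [h2] at this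
  exact this

lemma SGp_tendsto_atBot : Tendsto SGp atBot (𝓝 0) := by
  have h1 : Tendsto (fun ξ : ℝ => 4 * Real.exp ξ) atBot (𝓝 0) := by
    simpa using (Real.tendsto_exp_atBot).const_mul (4:ℝ)
  have h2 : Tendsto (fun ξ : ℝ => 1 + Real.exp ξ ^ 2) atBot (𝓝 1) := by
    have : Tendsto (fun ξ : ℝ => Real.exp ξ ^ 2) atBot (𝓝 0) := by
      simpa using (Real.tendsto_exp_atBot).pow 2
    simpa using this.const_add (1:ℝ)
  exact (by simpa using h1.div h2 (by norm_num) : Tendsto ((fun ξ : ℝ => 4 * Real.exp ξ) / fun ξ => 1 + Real.exp ξ ^ 2) atBot (𝓝 0))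

lemma SGp_tendsto_atTop : Tendsto SGp atTop (𝓝 0) := by
  have h2 : Tendsto (fun ξ : ℝ => SGp (-ξ)) atTop (𝓝 0) :=
    SGp_tendsto_atBot.comp tendsto_neg_atTop_atBot
  exact h2.congr (fun ξ => SGp_reflect ξ)

lemma continuous_SGp : Continuous SGp := by
  apply Continuous.div
  · exact continuous_const.mul Real.continuous_exp
  · exact (continuous_const.add ((Real.continuous_exp).pow 2))
  · intro x; positivity

lemma ode_fwd {v : ℝ → ℝ → ℝ} {K : NNReal} (hv : ∀ t, LipschitzWith K (v t)) {f g : ℝ → ℝ}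
    {a b : ℝ} (hf : ∀ t ∈ Icc a b, HasDerivAt f (v t (f t)) t)
    (hg : ∀ t ∈ Icc a b, HasDerivAt g (v t (g t)) t)
    (ha : f a = g a) : ∀ t ∈ Icc a b, f t = g t := by
  intro t ht
  exact ODE_solution_unique hv
    (fun x hx => (hf x hx).continuousAt.continuousWithinAt)
    (fun x hx => (hf x (Ico_subset_Icc_self hx)).hasDerivWithinAt)
    (fun x hx => (hg x hx).continuousAt.continuousWithinAt)
    (fun x hx => (hg x (Ico_subset_Icc_self hx)).hasDerivWithinAt) ha ht

lemma ode_bwd {v : ℝ → ℝ → ℝ} {K : NNReal} (hv : ∀ t, LipschitzWith K (v t)) {f g : ℝ → ℝ}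
    {a b : ℝ} (hf : ∀ t ∈ Icc a b, HasDerivAt f (v t (f t)) t)
    (hg : ∀ t ∈ Icc a b, HasDerivAt g (v t (g t)) t)
    (hb : f b = g b) : ∀ t ∈ Icc a b, f t = g t := by
  intro t ht
  exact ODE_solution_unique_of_mem_Icc_left (s := fun _ => Set.univ)
    (fun t _ => (hv t).lipschitzOnWith)
    (fun x hx => (hf x hx).continuousAt.continuousWithinAt)
    (fun x hx => (hf x (Ioc_subset_Icc_self hx)).hasDerivWithinAt.mono (fun y hy => hy))
    (fun _ _ => trivial)
    (fun x hx => (hg x hx).continuousAt.continuousWithinAt)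
    (fun x hx => (hg x (Ioc_subset_Icc_self hx)).hasDerivWithinAt.mono (fun y hy => hy))
    (fun _ _ => trivial) hb ht

lemma right_lim_eq {f : ℝ → ℝ} {a c : ℝ} (hf : ContinuousAt f a)
    (h : ∀ x, a < x → f x = c) : f a = c := by
  have h1 : Tendsto f (𝓝[>] a) (𝓝 (f a)) := hf.continuousWithinAt.tendsto
  have h2 : Tendsto f (𝓝[>] a) (𝓝 c) := by
    apply Tendsto.congr' _ tendsto_const_nhds
    filter_upwards [self_mem_nhdsWithin] with x hx
    exact (h x hx).symm
  exact tendsto_nhds_unique h1 h2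

lemma left_lim_eq {f : ℝ → ℝ} {a c : ℝ} (hf : ContinuousAt f a)
    (h : ∀ x, x < a → f x = c) : f a = c := by
  have h1 : Tendsto f (𝓝[<] a) (𝓝 (f a)) := hf.continuousWithinAt.tendsto
  have h2 : Tendsto f (𝓝[<] a) (𝓝 c) := by
    apply Tendsto.congr' _ tendsto_const_nhds
    filter_upwards [self_mem_nhdsWithin] with x hx
    exact (h x hx).symm
  exact tendsto_nhds_unique h1 h2

lemma const_of_hasDerivAt_zero {f : ℝ → ℝ} {x y : ℝ} (hxy : x ≤ y)
    (hf : ∀ t ∈ Icc x y, HasDerivAt f 0 t) : f y = f x :=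
  constant_of_has_deriv_right_zero
    (fun t ht => (hf t ht).continuousAt.continuousWithinAt)
    (fun t ht => (hf t (Ico_subset_Icc_self ht)).hasDerivWithinAt) y (right_mem_Icc.2 hxy)

lemma const_from_tendsto_atTop {f : ℝ → ℝ} {a c : ℝ}
    (hconst : ∀ x, a < x → ∀ y, a < y → f x = f y)
    (hlim : Tendsto f atTop (𝓝 c)) : ∀ x, a < x → f x = c := by
  intro x hx
  have h2 : Tendsto f atTop (𝓝 (f x)) := by
    apply Tendsto.congr' _ tendsto_const_nhds
    filter_upwards [eventually_gt_atTop a] with y hy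
    exact (hconst x hx y hy)
  exact tendsto_nhds_unique h2 hlim

lemma const_from_tendsto_atBot {f : ℝ → ℝ} {a c : ℝ}
    (hconst : ∀ x, x < a → ∀ y, y < a → f x = f y)
    (hlim : Tendsto f atBot (𝓝 c)) : ∀ x, x < a → f x = c := by
  intro x hx
  have h2 : Tendsto f atBot (𝓝 (f x)) := by
    apply Tendsto.congr' _ tendsto_const_nhds
    filter_upwards [eventually_lt_atBot a] with y hy
    exact (hconst x hx y hy)
  exact tendsto_nhds_unique h2 hlim

lemma sin_sq_half' (x : ℝ) : Real.sin (x/2)^2 = (1 - Real.cos x)/2 := by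
  have h1 : Real.cos (2 * (x/2)) = 2 * Real.cos (x/2)^2 - 1 := Real.cos_two_mul (x/2)
  have h2 : (2:ℝ) * (x/2) = x := by ring
  rw [h2] at h1
  nlinarith [Real.sin_sq_add_cos_sq (x/2)]

lemma sin_eq_double (x : ℝ) : Real.sin x = 2 * Real.sin (x/2) * Real.cos (x/2) := by
  have h1 : Real.sin (2 * (x/2)) = 2 * Real.sin (x/2) * Real.cos (x/2) := Real.sin_two_mul (x/2)
  have h2 : (2:ℝ) * (x/2) = x := by ring
  rwa [h2] at h1

lemma arccos_lt_pi' {x : ℝ} (hx : -1 < x) : Real.arccos x < π := by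
  rcases lt_or_eq_of_le (Real.arccos_le_pi x) with h | h
  · exact h
  · exfalso
    have := Real.arccos_eq_pi.1 h
    linarith

noncomputable def Ffun (h : ℝ) : ℝ := (π - Real.arccos (1 - h)) / Real.sqrt (2 * h)

lemma Ffun_strictAnti {h1 h2 : ℝ} (h1m : h1 ∈ Ioo (0:ℝ) 2) (h2m : h2 ∈ Ioo (0:ℝ) 2)
    (hlt : h1 < h2) : Ffun h2 < Ffun h1 := by
  have ha1 : Real.arccos (1 - h1) < Real.arccos (1 - h2) := by
    apply Real.strictAntiOn_arccos
    · constructor <;> [linarith [h2m.2]; linarith [h2m.1]]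
    · constructor <;> [linarith [h1m.2]; linarith [h1m.1]]
    · linarith
  have hn2 : 0 < π - Real.arccos (1 - h2) := by
    have := arccos_lt_pi' (x := 1 - h2) (by linarith [h2m.2])
    linarith
  have hd1 : 0 < Real.sqrt (2 * h1) := Real.sqrt_pos.2 (by linarith [h1m.1])
  have hd2 : Real.sqrt (2 * h1) < Real.sqrt (2 * h2) :=
    Real.sqrt_lt_sqrt (by linarith [h1m.1]) (by linarith)
  calc Ffun h2 = (π - Real.arccos (1 - h2)) / Real.sqrt (2 * h2) := rfl
    _ < (π - Real.arccos (1 - h2)) / Real.sqrt (2 * h1) := by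
        exact div_lt_div_of_pos_left hn2 hd1 hd2
    _ ≤ (π - Real.arccos (1 - h1)) / Real.sqrt (2 * h1) := by
        gcongr
    _ = Ffun h1 := rfl

lemma part1 {L : ℝ} (hL : 0 < L) :
    ∃! h : ℝ, h ∈ Set.Ioo (0 : ℝ) 2 ∧ L = (π - Real.arccos (1 - h)) / Real.sqrt (2 * h) := by
  have hπ := Real.pi_pos
  set h0 : ℝ := min 1 (π^2/(9 * L^2)) with hh0
  have hh0pos : 0 < h0 := lt_min one_pos (by positivity)
  have hh0le1 : h0 ≤ 1 := min_le_left _ _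
  have hh0lt2 : h0 < 2 := by linarith
  have hFh0 : L < Ffun h0 := by
    have harc : Real.arccos (1 - h0) ≤ π/2 := Real.arccos_le_pi_div_two.2 (by linarith)
    have hnum : π/2 ≤ π - Real.arccos (1 - h0) := by linarith
    have hsq : (Real.sqrt 2 * π / (3*L))^2 = 2 * (π^2/(9*L^2)) := by
      rw [div_pow, mul_pow, Real.sq_sqrt (by norm_num : (0:ℝ) ≤ 2)]
      field_simp; ring
    have hval : Real.sqrt (2 * (π^2/(9*L^2))) = Real.sqrt 2 * π / (3 * L) := by
      rw [← hsq, Real.sqrt_sq (by positivity)]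
    have hden : Real.sqrt (2 * h0) ≤ Real.sqrt 2 * π / (3 * L) := by
      rw [← hval]
      apply Real.sqrt_le_sqrt
      have := min_le_right 1 (π^2/(9 * L^2))
      nlinarith
    have hsq2 : Real.sqrt 2 < 3/2 := by
      have h2 : (Real.sqrt 2)^2 = 2 := Real.sq_sqrt (by norm_num)
      nlinarith [Real.sqrt_nonneg 2]
    have hdenpos : 0 < Real.sqrt (2 * h0) := Real.sqrt_pos.2 (by linarith)
    have hden2 : Real.sqrt (2 * h0) < π / (2 * L) := by
      calc Real.sqrt (2 * h0) ≤ Real.sqrt 2 * π / (3 * L) := hden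
        _ < π / (2 * L) := by
            rw [div_lt_div_iff₀ (by positivity) (by positivity)]
            nlinarith [mul_pos hπ hL]
    have hkey : L < (π/2) / Real.sqrt (2 * h0) := by
      rw [lt_div_iff₀ hdenpos]
      calc L * Real.sqrt (2 * h0) < L * (π / (2*L)) := mul_lt_mul_of_pos_left hden2 hL
        _ = π/2 := by field_simp
    calc L < (π/2) / Real.sqrt (2 * h0) := hkey
      _ ≤ Ffun h0 := by
          unfold Ffun
          gcongr
  have hF2 : Ffun 2 = 0 := by
    unfold Ffun
    rw [show (1:ℝ) - 2 = -1 by norm_num, Real.arccos_neg_one, sub_self, zero_div]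
  have hcont : ContinuousOn Ffun (Icc h0 2) := by
    apply ContinuousOn.div
    · exact (continuous_const.sub (Real.continuous_arccos.comp
        (continuous_const.sub continuous_id))).continuousOn
    · exact (Real.continuous_sqrt.comp (continuous_const.mul continuous_id)).continuousOn
    · intro x hx
      exact (Real.sqrt_pos.2 (by nlinarith [hx.1])).ne'
  have hIVT := intermediate_value_Icc' (le_of_lt hh0lt2) hcont
  have hLmem : L ∈ Icc (Ffun 2) (Ffun h0) := ⟨by rw [hF2]; exact hL.le, hFh0.le⟩
  obtain ⟨h, hmem, hFh⟩ := hIVT hLmem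
  have hh2 : h < 2 := by
    rcases lt_or_eq_of_le hmem.2 with hc | hc
    · exact hc
    · exfalso; rw [hc, hF2] at hFh; linarith [hFh, hL]
  refine ⟨h, ⟨⟨lt_of_lt_of_le hh0pos hmem.1, hh2⟩, hFh.symm⟩, ?_⟩
  rintro h' ⟨h'm, hFh'⟩
  by_contra hne
  have hm : h ∈ Ioo (0:ℝ) 2 := ⟨lt_of_lt_of_le hh0pos hmem.1, hh2⟩
  rcases lt_or_gt_of_ne hne with hlt | hlt
  · have := Ffun_strictAnti h'm hm hlt
    rw [hFh] at this
    unfold Ffun at this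
    rw [← hFh'] at this
    exact lt_irrefl L this
  · have := Ffun_strictAnti hm h'm hlt
    unfold Ffun at this
    rw [← hFh'] at this
    rw [show (π - Real.arccos (1 - h)) / Real.sqrt (2 * h) = L from hFh] at this
    exact lt_irrefl L this





noncomputable def PF (L h xs : ℝ) : ℝ → ℝ := fun x =>
  if x ≤ -L then φ₀ (x + xs)
  else if x < L then π + ((π - Real.arccos (1 - h)) / L) * x
  else φ₀ (x - xs)

noncomputable def PF' (L s xs : ℝ) : ℝ → ℝ := fun x =>
  if x ≤ -L then SGp (x + xs) else if x < L then s else SGp (x - xs)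

lemma hasDerivAt_φ₀_shift (c x : ℝ) : HasDerivAt (fun y => φ₀ (y + c)) (SGp (x + c)) x := by
  have h := (hasDerivAt_φ₀ (x + c)).comp x ((hasDerivAt_id x).add_const c)
  exact h.congr_deriv (mul_one _)

lemma hasDerivAt_SGp_shift (c x : ℝ) :
    HasDerivAt (fun y => SGp (y + c)) (Real.sin (φ₀ (x + c))) x := by
  have h := (hasDerivAt_SGp (x + c)).comp x ((hasDerivAt_id x).add_const c)
  exact h.congr_deriv (mul_one _)


lemma explicit_pinned {L h xs : ℝ} (hL : 0 < L) (hh : h ∈ Set.Ioo (0:ℝ) 2)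
    (hLh : L = (π - Real.arccos (1 - h)) / Real.sqrt (2 * h))
    (hxs : φ₀ (-L + xs) = Real.arccos (1 - h)) :
    IsPinnedFluxon L 0 0 (PF L h xs) := by
  set θ := Real.arccos (1 - h) with hθdef
  set s := Real.sqrt (2 * h) with hsdef
  have hθ1 : 0 < θ := Real.arccos_pos.2 (by linarith [hh.1])
  have hθ2 : θ < π := by
    have h1 : θ ≤ π := Real.arccos_le_pi _
    rcases lt_or_eq_of_le h1 with h2 | h2
    · exact h2
    · exfalso
      have h3 : Real.cos θ = 1 - h := Real.cos_arccos (by linarith [hh.2]) (by linarith [hh.1])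
      rw [h2, Real.cos_pi] at h3
      linarith [hh.2]
  have hcθ : Real.cos θ = 1 - h := Real.cos_arccos (by linarith [hh.2]) (by linarith [hh.1])
  have hs : 0 < s := Real.sqrt_pos.2 (by linarith [hh.1])
  have hsinθ : 0 ≤ Real.sin (θ/2) := Real.sin_nonneg_of_nonneg_of_le_pi (by linarith) (by linarith)
  have hsθ : 2 * Real.sin (θ/2) = s := by
    have h1 : (2 * Real.sin (θ/2))^2 = 2 * h := by
      have := sin_sq_half' θ
      nlinarith
    rw [hsdef, ← h1, Real.sqrt_sq (by linarith)]
  have hLs : L * s = π - θ := by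
    rw [hLh]; field_simp
  have hslope : (π - θ) / L = s := by
    rw [← hLs]; field_simp
  have hsgp : SGp (-L + xs) = s := by
    rw [← sin_half_φ₀, hxs]; exact hsθ
  have hval_mL : φ₀ (-L + xs) = θ := hxs
  have hval_L : φ₀ (L - xs) = 2 * π - θ := by
    have heq : L - xs = -(-L + xs) := by ring
    rw [heq, φ₀_reflect, hval_mL]
  have hsgpL : SGp (L - xs) = s := by
    have heq : L - xs = -(-L + xs) := by ring
    rw [heq, SGp_reflect, hsgp]
  have hLL : -L < L := by linarith
  set lin : ℝ → ℝ := fun x => π + s * x with hlin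
  have hlin_mL : lin (-L) = θ := by
    show π + s * (-L) = θ
    have : s * (-L) = -(L * s) := by ring
    rw [this, hLs]; ring
  have hlin_L : lin L = 2 * π - θ := by
    show π + s * L = 2 * π - θ
    have : s * L = L * s := by ring
    rw [this, hLs]; ring
  have hEq_left : ∀ y, y ≤ -L → PF L h xs y = φ₀ (y + xs) := by
    intro y hy; simp only [PF, if_pos hy]
  have hEq_right : ∀ y, L ≤ y → PF L h xs y = φ₀ (y - xs) := by
    intro y hy
    have h1 : ¬ (y ≤ -L) := by push_neg; linarith
    have h2 : ¬ (y < L) := by push_neg; linarith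
    simp only [PF, if_neg h1, if_neg h2]
  have hEq_mid : ∀ y ∈ Icc (-L) L, PF L h xs y = lin y := by
    intro y hy
    rcases le_or_gt y (-L) with h1 | h1
    · have hyL : y = -L := le_antisymm h1 hy.1
      rw [hEq_left y h1, hyL, hlin_mL]
      exact hxs
    · rcases lt_or_ge y L with h2 | h2
      · simp only [PF, if_neg (not_le.2 h1), if_pos h2]
        show π + (π - θ)/L * y = lin y
        rw [hslope]
      · have hyL : y = L := le_antisymm hy.2 h2
        rw [hEq_right y h2, hyL, hlin_L, hval_L]
  have hlin_deriv : ∀ x : ℝ, HasDerivAt lin s x := by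
    intro x
    have h0 := ((hasDerivAt_id x).const_mul s).const_add π
    exact h0.congr_deriv (mul_one s)
  -- derivative at the two junctions
  have hAt_mL : HasDerivAt (PF L h xs) s (-L) := by
    have hleft : HasDerivWithinAt (PF L h xs) s (Iic (-L)) (-L) := by
      have h1 : HasDerivWithinAt (fun y => φ₀ (y + xs)) s (Iic (-L)) (-L) := by
        have h2 := (hasDerivAt_φ₀_shift xs (-L)).hasDerivWithinAt (s := Iic (-L))
        rwa [hsgp] at h2
      exact h1.congr (fun y hy => hEq_left y hy) (hEq_left _ le_rfl)
    have hright : HasDerivWithinAt (PF L h xs) s (Icc (-L) L) (-L) :=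
      ((hlin_deriv (-L)).hasDerivWithinAt).congr hEq_mid (hEq_mid _ ⟨le_rfl, hLL.le⟩)
    have hunion := hleft.union hright
    have hset : Iic (-L) ∪ Icc (-L) L = Iic L := by
      ext y; simp only [mem_union, mem_Iic, mem_Icc]
      constructor
      · rintro (hc | hc)
        · linarith
        · exact hc.2
      · intro hy
        rcases le_or_gt y (-L) with hc | hc
        · exact Or.inl hc
        · exact Or.inr ⟨hc.le, hy⟩
    rw [hset] at hunion
    exact hunion.hasDerivAt (Iic_mem_nhds hLL)
  have hAt_L : HasDerivAt (PF L h xs) s L := by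
    have hleft : HasDerivWithinAt (PF L h xs) s (Icc (-L) L) L :=
      ((hlin_deriv L).hasDerivWithinAt).congr hEq_mid (hEq_mid _ ⟨hLL.le, le_rfl⟩)
    have hright : HasDerivWithinAt (PF L h xs) s (Ici L) L := by
      have h2 : HasDerivAt (fun y => φ₀ (y - xs)) (SGp (L - xs)) L := by
        have h3 := (hasDerivAt_φ₀ (L - xs)).comp L ((hasDerivAt_id L).sub_const xs)
        exact h3.congr_deriv (mul_one _)
      rw [hsgpL] at h2
      exact (h2.hasDerivWithinAt).congr (fun y hy => hEq_right y hy) (hEq_right _ le_rfl)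
    have hunion := hleft.union hright
    have hset : Icc (-L) L ∪ Ici L = Ici (-L) := by
      ext y; simp only [mem_union, mem_Icc, mem_Ici]
      constructor
      · rintro (hc | hc)
        · exact hc.1
        · linarith
      · intro hy
        rcases le_or_gt y L with hc | hc
        · exact Or.inl ⟨hy, hc⟩
        · exact Or.inr hc.le
    rw [hset] at hunion
    exact hunion.hasDerivAt (Ici_mem_nhds hLL)
  have hPFderiv : ∀ x : ℝ, HasDerivAt (PF L h xs) (PF' L s xs x) x := by
    intro x
    rcases lt_trichotomy x (-L) with hx | hx | hx
    · have hmem : Iio (-L) ∈ 𝓝 x := Iio_mem_nhds hx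
      have heq : PF L h xs =ᶠ[𝓝 x] (fun y => φ₀ (y + xs)) := by
        filter_upwards [hmem] with y hy
        exact hEq_left y (mem_Iio.1 hy).le
      have h1 : PF' L s xs x = SGp (x + xs) := by
        simp only [PF', if_pos hx.le]
      rw [h1]
      exact (hasDerivAt_φ₀_shift xs x).congr_of_eventuallyEq heq
    · have h1 : PF' L s xs x = s := by
        rw [hx]
        simp only [PF', if_pos le_rfl]
        exact hsgp
      rw [h1, hx]
      exact hAt_mL
    · rcases lt_trichotomy x L with hx2' | hx2' | hx2'
      · have hmem : Ioo (-L) L ∈ 𝓝 x := Ioo_mem_nhds hx hx2'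
        have heq : PF L h xs =ᶠ[𝓝 x] lin := by
          filter_upwards [hmem] with y hy
          exact hEq_mid y ⟨hy.1.le, hy.2.le⟩
        have h1 : PF' L s xs x = s := by
          simp only [PF', if_neg (not_le.2 hx), if_pos hx2']
        rw [h1]
        exact (hlin_deriv x).congr_of_eventuallyEq heq
      · have h1 : PF' L s xs x = s := by
          rw [hx2']
          simp only [PF', if_neg (not_le.2 hLL), if_neg (lt_irrefl L)]
          exact hsgpL
        rw [h1, hx2']
        exact hAt_L
      · have hmem : Ioi L ∈ 𝓝 x := Ioi_mem_nhds hx2'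
        have heq : PF L h xs =ᶠ[𝓝 x] (fun y => φ₀ (y - xs)) := by
          filter_upwards [hmem] with y hy
          exact hEq_right y (mem_Ioi.1 hy).le
        have h1 : PF' L s xs x = SGp (x - xs) := by
          have hn : ¬ (x ≤ -L) := by push_neg; linarith
          simp only [PF', if_neg hn, if_neg (not_lt.2 hx2'.le)]
        rw [h1]
        have h2 : HasDerivAt (fun y => φ₀ (y - xs)) (SGp (x - xs)) x := by
          have h3 := (hasDerivAt_φ₀ (x - xs)).comp x ((hasDerivAt_id x).sub_const xs)
          exact h3.congr_deriv (mul_one _)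
        exact h2.congr_of_eventuallyEq heq
  have hderivPF : deriv (PF L h xs) = PF' L s xs := funext fun x => (hPFderiv x).deriv
  have hcontPF' : Continuous (PF' L s xs) := by
    have hrepr : PF' L s xs = fun x =>
        if x ≤ -L then SGp (x + xs) else if L ≤ x then SGp (x - xs) else s := by
      funext y
      simp only [PF']
      rcases le_or_gt y (-L) with hc | hc
      · rw [if_pos hc, if_pos hc]
      · rw [if_neg (not_le.2 hc), if_neg (not_le.2 hc)]
        rcases lt_or_ge y L with h2 | h2
        · rw [if_pos h2, if_neg (not_le.2 h2)]
        · rw [if_neg (not_lt.2 h2), if_pos h2]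
    rw [hrepr]
    apply Continuous.if_le
    · exact continuous_SGp.comp (continuous_id.add continuous_const)
    · apply Continuous.if_le
      · exact continuous_SGp.comp (continuous_id.sub continuous_const)
      · exact continuous_const
      · exact continuous_const
      · exact continuous_id
      · intro y hy
        rw [← hy, hsgpL]
    · exact continuous_id
    · exact continuous_const
    · intro y hy
      rw [hy, if_neg (not_le.2 hLL)]
      exact hsgp
  refine ⟨?_, ?_, ?_, ?_, ?_, ?_⟩
  · rw [contDiff_one_iff_deriv]
    exact ⟨fun x => (hPFderiv x).differentiableAt, by rw [hderivPF]; exact hcontPF'⟩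
  · intro x hx1 hx2
    rcases lt_trichotomy x (-L) with hx | hx | hx
    · refine ⟨Real.sin (φ₀ (x + xs)), ?_, ?_⟩
      · rw [hderivPF]
        have hmem : Iio (-L) ∈ 𝓝 x := Iio_mem_nhds hx
        have heq : PF' L s xs =ᶠ[𝓝 x] (fun y => SGp (y + xs)) := by
          filter_upwards [hmem] with y hy
          simp only [PF', if_pos (mem_Iio.1 hy).le]
        exact (hasDerivAt_SGp_shift xs x).congr_of_eventuallyEq heq
      · have hD : Dfun L 0 x = 1 := by
          have hn : ¬ (|x| < L) := by
            rw [abs_lt]; push_neg; intro h'; linarith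
          simp only [Dfun, if_neg hn]
        have hPFx : PF L h xs x = φ₀ (x + xs) := hEq_left x hx.le
        rw [hD, hPFx]; ring
    · exact absurd hx hx1
    · rcases lt_trichotomy x L with hx2' | hx2' | hx2'
      · refine ⟨0, ?_, ?_⟩
        · rw [hderivPF]
          have hmem : Ioo (-L) L ∈ 𝓝 x := Ioo_mem_nhds hx hx2'
          have heq : PF' L s xs =ᶠ[𝓝 x] (fun _ => s) := by
            filter_upwards [hmem] with y hy
            simp only [PF', if_neg (not_le.2 hy.1), if_pos hy.2]
          exact (hasDerivAt_const x s).congr_of_eventuallyEq heq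
        · have hD : Dfun L 0 x = 0 := by
            have hax : |x| < L := abs_lt.2 ⟨hx, hx2'⟩
            simp only [Dfun, if_pos hax]
          rw [hD]; ring
      · exact absurd hx2' hx2
      · refine ⟨Real.sin (φ₀ (x - xs)), ?_, ?_⟩
        · rw [hderivPF]
          have hmem : Ioi L ∈ 𝓝 x := Ioi_mem_nhds hx2'
          have heq : PF' L s xs =ᶠ[𝓝 x] (fun y => SGp (y - xs)) := by
            filter_upwards [hmem] with y hy
            have h1 : ¬ (y ≤ -L) := by
              have := mem_Ioi.1 hy
              push_neg; linarith
            simp only [PF', if_neg h1, if_neg (not_lt.2 (mem_Ioi.1 hy).le)]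
          have h2 : HasDerivAt (fun y => SGp (y - xs)) (Real.sin (φ₀ (x - xs))) x := by
            have h3 := (hasDerivAt_SGp (x - xs)).comp x ((hasDerivAt_id x).sub_const xs)
            exact h3.congr_deriv (mul_one _)
          exact h2.congr_of_eventuallyEq heq
        · have hD : Dfun L 0 x = 1 := by
            have hn : ¬ (|x| < L) := by
              rw [abs_lt]; push_neg; intro h'; linarith
            simp only [Dfun, if_neg hn]
          have hPFx : PF L h xs x = φ₀ (x - xs) := hEq_right x hx2'.le
          rw [hD, hPFx]; ring
  · rw [Real.arcsin_zero]
    have h1 : Tendsto (fun x : ℝ => φ₀ (x + xs)) atBot (𝓝 0) :=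
      φ₀_tendsto_atBot.comp (tendsto_atBot_add_const_right _ xs tendsto_id)
    apply h1.congr'
    filter_upwards [eventually_le_atBot (-L)] with x hx
    exact (hEq_left x hx).symm
  · rw [Real.arcsin_zero, zero_add]
    have h1 : Tendsto (fun x : ℝ => φ₀ (x - xs)) atTop (𝓝 (2 * π)) :=
      φ₀_tendsto_atTop.comp (tendsto_atTop_add_const_right _ (-xs) tendsto_id)
    have h2 : (fun x : ℝ => φ₀ (x - xs)) = fun x : ℝ => φ₀ (x + -xs) := by
      funext y; rw [sub_eq_add_neg]
    apply h1.congr'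
    filter_upwards [eventually_ge_atTop L] with x hx
    exact (hEq_right x hx).symm
  · rw [hderivPF]
    have h1 : Tendsto (fun x : ℝ => SGp (x + xs)) atBot (𝓝 0) :=
      SGp_tendsto_atBot.comp (tendsto_atBot_add_const_right _ xs tendsto_id)
    apply h1.congr'
    filter_upwards [eventually_le_atBot (-L)] with x hx
    simp only [PF', if_pos hx]
  · rw [hderivPF]
    have h1 : Tendsto (fun x : ℝ => SGp (x - xs)) atTop (𝓝 0) :=
      SGp_tendsto_atTop.comp (tendsto_atTop_add_const_right _ (-xs) tendsto_id)
    apply h1.congr'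
    filter_upwards [eventually_ge_atTop L] with x hx
    have h2 : ¬ (x ≤ -L) := by push_neg; linarith
    simp only [PF', if_neg h2, if_neg (not_lt.2 hx)]

lemma right_lim_eq' {f : ℝ → ℝ} {a c : ℝ} (hf : ContinuousAt f a)
    (h : ∀ᶠ x in 𝓝[>] a, f x = c) : f a = c := by
  have h1 : Tendsto f (𝓝[>] a) (𝓝 (f a)) := hf.continuousWithinAt.tendsto
  have h2 : Tendsto f (𝓝[>] a) (𝓝 c) := by
    apply Tendsto.congr' _ tendsto_const_nhds
    filter_upwards [h] with x hx using hx.symm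
  exact tendsto_nhds_unique h1 h2

lemma lip_mul {c : ℝ} (hc : |c| ≤ 1) : LipschitzWith 1 (fun y : ℝ => c * y) := by
  apply LipschitzWith.of_dist_le_mul
  intro x y
  rw [Real.dist_eq, Real.dist_eq, ← mul_sub, abs_mul, NNReal.coe_one, one_mul]
  exact mul_le_of_le_one_left (abs_nonneg _) hc

lemma hasDerivAt_two_sin_half (x : ℝ) :
    HasDerivAt (fun y : ℝ => 2 * Real.sin (y/2)) (Real.cos (x/2)) x := by
  have h1 : HasDerivAt (fun y : ℝ => y/2) (1/2) x := (hasDerivAt_id x).div_const 2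
  have h2 := ((Real.hasDerivAt_sin (x/2)).comp x h1).const_mul 2
  refine h2.congr_deriv (Eq.symm ?_)
  ring

lemma lip_sin_half : LipschitzWith 1 (fun y : ℝ => 2 * Real.sin (y/2)) := by
  apply lipschitzWith_of_nnnorm_deriv_le
    (fun x => (hasDerivAt_two_sin_half x).differentiableAt)
  intro x
  rw [(hasDerivAt_two_sin_half x).deriv]
  have h1 : ‖Real.cos (x/2)‖ ≤ 1 := by
    rw [Real.norm_eq_abs]; exact Real.abs_cos_le_one _
  exact_mod_cast h1

lemma lip_neg_sin_half : LipschitzWith 1 (fun y : ℝ => -(2 * Real.sin (y/2))) := by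
  exact lip_sin_half.neg

lemma cand_exists {a : ℝ} (ha : Real.sin (a/2) ≠ 0) :
    ∃ (k : ℤ) (ε : ℝ), (ε = 1 ∨ ε = -1) ∧ ε * (a - 4*π*k) ∈ Ioo 0 (2*π) := by
  have hπ := Real.pi_pos
  set j : ℤ := ⌊a / (2*π)⌋ with hj
  have hj1 : (j : ℝ) ≤ a / (2*π) := Int.floor_le _
  have hj2 : a / (2*π) < j + 1 := Int.lt_floor_add_one _
  have hb1 : 2*π*j ≤ a := by
    rw [mul_comm]
    calc (j:ℝ) * (2*π) ≤ (a / (2*π)) * (2*π) := by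
          apply mul_le_mul_of_nonneg_right hj1 (by positivity)
      _ = a := by field_simp
  have hb2 : a < 2*π*(j+1) := by
    calc a = (a / (2*π)) * (2*π) := by field_simp
      _ < (j+1) * (2*π) := by
          apply mul_lt_mul_of_pos_right hj2 (by positivity)
      _ = 2*π*(j+1) := by ring
  have hne : a ≠ 2*π*j := by
    intro hc
    apply ha
    rw [hc, show 2*π*(j:ℝ)/2 = (j:ℝ)*π by ring]
    exact Real.sin_int_mul_pi j
  have hb1' : 2*π*j < a := lt_of_le_of_ne hb1 (Ne.symm hne)
  rcases Int.even_or_odd j with ⟨k, hk⟩ | ⟨k, hk⟩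
  · refine ⟨k, 1, Or.inl rfl, ?_⟩
    have hkr : (j : ℝ) = 2*k := by rw [hk]; push_cast; ring
    rw [hkr] at hb1' hb2
    constructor
    · rw [one_mul]; nlinarith
    · rw [one_mul]; nlinarith
  · refine ⟨k + 1, -1, Or.inr rfl, ?_⟩
    have hkr : (j : ℝ) = 2*k + 1 := by rw [hk]; push_cast; ring
    rw [hkr] at hb1' hb2
    have hkr2 : ((k + 1 : ℤ) : ℝ) = (k : ℝ) + 1 := by push_cast; ring
    rw [hkr2]
    constructor
    · nlinarith
    · nlinarith

lemma cand_ode_pos {k : ℤ} {ε : ℝ} (hε : ε = 1 ∨ ε = -1) (r x : ℝ) :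
    HasDerivAt (fun y => 4*π*k + ε * φ₀ (y + r))
      (2 * Real.sin ((4*π*k + ε * φ₀ (x + r))/2)) x := by
  have h1 : HasDerivAt (fun y => φ₀ (y + r)) (SGp (x + r)) x := by
    have := (hasDerivAt_φ₀ (x + r)).comp x ((hasDerivAt_id x).add_const r)
    exact this.congr_deriv (mul_one _)
  have h2 := (h1.const_mul ε).const_add (4*π*k)
  refine h2.congr_deriv (Eq.symm ?_)
  have h3 : (4*π*k + ε * φ₀ (x + r))/2 = ε * φ₀ (x+r) / 2 + (k : ℤ) * (2 * π) := by
    push_cast; ring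
  rw [h3, Real.sin_add_int_mul_two_pi]
  rcases hε with h | h
  · subst h
    simp only [one_mul]
    exact sin_half_φ₀ (x+r)
  · subst h
    rw [show (-1:ℝ) * φ₀ (x+r) / 2 = -(φ₀ (x+r)/2) by ring, Real.sin_neg]
    have := sin_half_φ₀ (x+r)
    linarith

lemma cand_ode_neg {k : ℤ} {ε : ℝ} (hε : ε = 1 ∨ ε = -1) (r x : ℝ) :
    HasDerivAt (fun y => 4*π*k + ε * φ₀ (-y + r))
      (-(2 * Real.sin ((4*π*k + ε * φ₀ (-x + r))/2))) x := by
  have h1 : HasDerivAt (fun y => φ₀ (-y + r)) (-SGp (-x + r)) x := by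
    have h0 : HasDerivAt (fun y : ℝ => -y + r) (-1) x := by
      simpa using ((hasDerivAt_id x).neg.add_const r)
    have := (hasDerivAt_φ₀ (-x + r)).comp x h0
    refine this.congr_deriv (Eq.symm ?_)
    ring
  have h2 := (h1.const_mul ε).const_add (4*π*k)
  refine h2.congr_deriv (Eq.symm ?_)
  have h3 : (4*π*k + ε * φ₀ (-x + r))/2 = ε * φ₀ (-x+r) / 2 + (k : ℤ) * (2 * π) := by
    push_cast; ring
  rw [h3, Real.sin_add_int_mul_two_pi]
  rcases hε with h | h
  · subst h
    simp only [one_mul]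
    have := sin_half_φ₀ (-x+r)
    linarith
  · subst h
    rw [show (-1:ℝ) * φ₀ (-x+r) / 2 = -(φ₀ (-x+r)/2) by ring, Real.sin_neg]
    have := sin_half_φ₀ (-x+r)
    linarith

lemma ray_lemma {L : ℝ} {ψ : ℝ → ℝ} (hdiff : Differentiable ℝ ψ)
    (hdc : Continuous (deriv ψ))
    (hode : ∀ x, L < x → HasDerivAt (deriv ψ) (Real.sin (ψ x)) x)
    (hlim : Tendsto ψ atTop (𝓝 (2 * π)))
    (hlim' : Tendsto (deriv ψ) atTop (𝓝 0)) :
    (∀ x, L ≤ x → ψ x = 2 * π ∧ deriv ψ x = 0) ∨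
    (∃ r, ∀ x, L ≤ x → ψ x = φ₀ (x + r) ∧ deriv ψ x = SGp (x + r)) ∨
    (∃ r, ∀ x, L ≤ x → ψ x = 4 * π - φ₀ (x + r) ∧ deriv ψ x = -SGp (x + r)) := by
  have hπ := Real.pi_pos
  have hψc : Continuous ψ := hdiff.continuous
  -- Energy
  set E : ℝ → ℝ := fun x => deriv ψ x * deriv ψ x / 2 + Real.cos (ψ x) with hE
  have hEcont : Continuous E := by
    apply Continuous.add
    · exact (hdc.mul hdc).div_const 2
    · exact Real.continuous_cos.comp hψc
  have hE' : ∀ x, L < x → HasDerivAt E 0 x := by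
    intro x hx
    have h1 := (hode x hx).mul (hode x hx)
    have h2 := h1.div_const 2
    have h3 : HasDerivAt (fun y => Real.cos (ψ y)) (-Real.sin (ψ x) * deriv ψ x) x :=
      (Real.hasDerivAt_cos (ψ x)).comp x (hdiff x).hasDerivAt
    have h4 := h2.add h3
    refine h4.congr_deriv (Eq.symm ?_)
    ring
  have hEconst : ∀ x, L < x → ∀ y, L < y → E x = E y := by
    intro x hx y hy
    rcases le_total x y with hc | hc
    · exact (const_of_hasDerivAt_zero hc (fun t ht => hE' t (lt_of_lt_of_le hx ht.1))).symm
    · exact const_of_hasDerivAt_zero hc (fun t ht => hE' t (lt_of_lt_of_le hy ht.1))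
  have hElim : Tendsto E atTop (𝓝 1) := by
    have h1 : Tendsto (fun x => deriv ψ x * deriv ψ x / 2) atTop (𝓝 0) := by
      simpa using (hlim'.mul hlim').div_const 2
    have h2 : Tendsto (fun x => Real.cos (ψ x)) atTop (𝓝 (Real.cos (2*π))) :=
      (Real.continuous_cos.continuousAt).tendsto.comp hlim
    rw [Real.cos_two_pi] at h2
    simpa using h1.add h2
  have hE1' : ∀ x, L < x → E x = 1 := by
    intro x hx
    have h2 : Tendsto E atTop (𝓝 (E x)) := by
      apply Tendsto.congr' _ tendsto_const_nhds
      filter_upwards [eventually_gt_atTop L] with y hy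
      exact hEconst x hx y hy
    exact tendsto_nhds_unique h2 hElim
  have hE1 : ∀ x, L ≤ x → E x = 1 := by
    intro x hx
    rcases lt_or_eq_of_le hx with hc | hc
    · exact hE1' x hc
    · subst hc
      apply right_lim_eq' hEcont.continuousAt
      filter_upwards [self_mem_nhdsWithin] with y hy
      exact hE1' y hy
  -- u and w
  set u : ℝ → ℝ := fun x => deriv ψ x - 2 * Real.sin (ψ x / 2) with hu
  set w : ℝ → ℝ := fun x => deriv ψ x + 2 * Real.sin (ψ x / 2) with hw
  have hucont : Continuous u := by
    apply hdc.sub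
    exact continuous_const.mul (Real.continuous_sin.comp (hψc.div_const 2))
  have hwcont : Continuous w := by
    apply hdc.add
    exact continuous_const.mul (Real.continuous_sin.comp (hψc.div_const 2))
  have huw : ∀ x, L ≤ x → u x * w x = 0 := by
    intro x hx
    have h1 := hE1 x hx
    have h2 := sin_sq_half' (ψ x)
    simp only [hE] at h1
    show (deriv ψ x - 2 * Real.sin (ψ x / 2)) * (deriv ψ x + 2 * Real.sin (ψ x / 2)) = 0
    nlinarith
  have hsin_deriv : ∀ x : ℝ, HasDerivAt (fun y => 2 * Real.sin (ψ y / 2))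
      (Real.cos (ψ x / 2) * deriv ψ x) x := by
    intro x
    have h0 : HasDerivAt (fun y : ℝ => ψ y / 2) (deriv ψ x / 2) x :=
      (hdiff x).hasDerivAt.div_const 2
    have h1 := ((Real.hasDerivAt_sin (ψ x / 2)).comp x h0).const_mul 2
    refine h1.congr_deriv (Eq.symm ?_)
    ring
  have hu' : ∀ x, L < x → HasDerivAt u (-Real.cos (ψ x / 2) * u x) x := by
    intro x hx
    have h1 := (hode x hx).sub (hsin_deriv x)
    refine h1.congr_deriv (Eq.symm ?_)
    simp only [hu]
    rw [sin_eq_double (ψ x)]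
    ring
  have hw' : ∀ x, L < x → HasDerivAt w (Real.cos (ψ x / 2) * w x) x := by
    intro x hx
    have h1 := (hode x hx).add (hsin_deriv x)
    refine h1.congr_deriv (Eq.symm ?_)
    simp only [hw]
    rw [sin_eq_double (ψ x)]
    ring
  -- dichotomy
  have hdich : (∀ x, L ≤ x → u x = 0) ∨ (∀ x, L ≤ x → w x = 0) := by
    by_cases hex : ∃ x0, L < x0 ∧ u x0 = 0
    · left
      obtain ⟨x0, hx0, hux0⟩ := hex
      have hopen : ∀ x, L < x → u x = 0 := by
        intro x hx
        rcases le_total x x0 with hc | hc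
        · have := ode_bwd (v := fun t y => -Real.cos (ψ t / 2) * y) (a := x) (b := x0)
            (fun t => lip_mul (by rw [abs_neg]; exact Real.abs_cos_le_one _))
            (f := u) (g := fun _ => 0)
            (fun t ht => hu' t (lt_of_lt_of_le hx ht.1))
            (fun t ht => by simpa using (hasDerivAt_const t (0:ℝ)))
            (by simpa using hux0)
          simpa using this x ⟨le_rfl, hc⟩
        · have := ode_fwd (v := fun t y => -Real.cos (ψ t / 2) * y) (a := x0) (b := x)
            (fun t => lip_mul (by rw [abs_neg]; exact Real.abs_cos_le_one _))
            (f := u) (g := fun _ => 0)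
            (fun t ht => hu' t (lt_of_lt_of_le hx0 ht.1))
            (fun t ht => by simpa using (hasDerivAt_const t (0:ℝ)))
            (by simpa using hux0)
          simpa using this x ⟨hc, le_rfl⟩
      intro x hx
      rcases lt_or_eq_of_le hx with hc | hc
      · exact hopen x hc
      · subst hc
        apply right_lim_eq' hucont.continuousAt
        filter_upwards [self_mem_nhdsWithin] with y hy
        exact hopen y hy
    · right
      push_neg at hex
      have hopen : ∀ x, L < x → w x = 0 := by
        intro x hx
        have := huw x hx.le
        rcases mul_eq_zero.1 this with hc | hc
        · exact absurd hc (hex x hx)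
        · exact hc
      intro x hx
      rcases lt_or_eq_of_le hx with hc | hc
      · exact hopen x hc
      · subst hc
        apply right_lim_eq' hwcont.continuousAt
        filter_upwards [self_mem_nhdsWithin] with y hy
        exact hopen y hy
  rcases hdich with hcase | hcase
  · -- ψ' = 2 sin(ψ/2) on [L, ∞)
    have hfo : ∀ x, L ≤ x → deriv ψ x = 2 * Real.sin (ψ x / 2) := by
      intro x hx
      have := hcase x hx
      simp only [hu] at this
      linarith
    by_cases hsb : Real.sin (ψ L / 2) = 0
    · left
      have hconst : ∀ x, L ≤ x → ψ x = ψ L := by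
        intro x hx
        have := ode_fwd (v := fun _ y => 2 * Real.sin (y / 2)) (a := L) (b := x)
          (fun _ => lip_sin_half) (f := ψ) (g := fun _ => ψ L)
          (fun t ht => by
            show HasDerivAt ψ (2 * Real.sin (ψ t / 2)) t
            rw [← hfo t ht.1]; exact (hdiff t).hasDerivAt)
          (fun t ht => by
            show HasDerivAt (fun _ => ψ L) (2 * Real.sin (ψ L / 2)) t
            rw [hsb]
            simpa using (hasDerivAt_const t (ψ L)))
          rfl
        simpa using this x ⟨hx, le_rfl⟩
      have hψL : ψ L = 2 * π := by
        have h2 : Tendsto ψ atTop (𝓝 (ψ L)) := by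
          apply Tendsto.congr' _ tendsto_const_nhds
          filter_upwards [eventually_ge_atTop L] with y hy
          exact (hconst y hy).symm
        exact tendsto_nhds_unique h2 hlim
      intro x hx
      refine ⟨by rw [hconst x hx, hψL], ?_⟩
      rw [hfo x hx, hconst x hx, hψL]
      rw [show 2*π/2 = π by ring, Real.sin_pi]
      ring
    · -- nonconstant: match candidate
      obtain ⟨k, ε, hε, hmem⟩ := cand_exists hsb
      obtain ⟨ξb, hξb⟩ := φ₀_surj hmem
      set r := ξb - L with hr
      set g : ℝ → ℝ := fun y => 4*π*k + ε * φ₀ (y + r) with hg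
      have hgL : g L = ψ L := by
        simp only [hg]
        rw [show L + r = ξb by rw [hr]; ring, hξb]
        rcases hε with h | h <;> subst h <;> ring
      have hmatch : ∀ x, L ≤ x → ψ x = g x := by
        intro x hx
        have := ode_fwd (v := fun _ y => 2 * Real.sin (y / 2)) (a := L) (b := x)
          (fun _ => lip_sin_half) (f := ψ) (g := g)
          (fun t ht => by
            show HasDerivAt ψ (2 * Real.sin (ψ t / 2)) t
            rw [← hfo t ht.1]; exact (hdiff t).hasDerivAt)
          (fun t ht => cand_ode_pos hε r t)
          hgL.symm
        exact this x ⟨hx, le_rfl⟩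
      have hglim : Tendsto g atTop (𝓝 (4*π*k + ε * (2*π))) := by
        have h1 : Tendsto (fun y : ℝ => φ₀ (y + r)) atTop (𝓝 (2*π)) :=
          φ₀_tendsto_atTop.comp (tendsto_atTop_add_const_right _ r tendsto_id)
        simpa using (h1.const_mul ε).const_add (4*π*k)
      have hlimeq : 4*π*k + ε * (2*π) = 2*π := by
        have h2 : Tendsto ψ atTop (𝓝 (4*π*k + ε * (2*π))) := by
          apply hglim.congr'
          filter_upwards [eventually_ge_atTop L] with y hy
          exact (hmatch y hy).symm
        exact tendsto_nhds_unique h2 hlim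
      rcases hε with hε1 | hε1
      · right; left
        subst hε1
        have hk0 : (k : ℝ) = 0 := by nlinarith
        refine ⟨r, fun x hx => ?_⟩
        have h1 : ψ x = φ₀ (x + r) := by
          rw [hmatch x hx]; simp only [hg]; rw [hk0]; ring
        refine ⟨h1, ?_⟩
        rw [hfo x hx, h1, sin_half_φ₀]
      · right; right
        subst hε1
        have hk1 : (k : ℝ) = 1 := by nlinarith
        refine ⟨r, fun x hx => ?_⟩
        have h1 : ψ x = 4 * π - φ₀ (x + r) := by
          rw [hmatch x hx]; simp only [hg]; rw [hk1]; ring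
        refine ⟨h1, ?_⟩
        rw [hfo x hx, h1]
        rw [show (4 * π - φ₀ (x + r))/2 = -(φ₀ (x+r)/2) + (1:ℤ) * (2*π) by push_cast; ring,
          Real.sin_add_int_mul_two_pi, Real.sin_neg]
        have := sin_half_φ₀ (x + r)
        linarith
  · -- ψ' = -2 sin(ψ/2) on [L, ∞)
    have hfo : ∀ x, L ≤ x → deriv ψ x = -(2 * Real.sin (ψ x / 2)) := by
      intro x hx
      have := hcase x hx
      simp only [hw] at this
      linarith
    by_cases hsb : Real.sin (ψ L / 2) = 0
    · left
      have hconst : ∀ x, L ≤ x → ψ x = ψ L := by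
        intro x hx
        have := ode_fwd (v := fun _ y => -(2 * Real.sin (y / 2))) (a := L) (b := x)
          (fun _ => lip_neg_sin_half) (f := ψ) (g := fun _ => ψ L)
          (fun t ht => by
            show HasDerivAt ψ (-(2 * Real.sin (ψ t / 2))) t
            rw [← hfo t ht.1]; exact (hdiff t).hasDerivAt)
          (fun t ht => by
            show HasDerivAt (fun _ => ψ L) (-(2 * Real.sin (ψ L / 2))) t
            rw [hsb]
            simpa using (hasDerivAt_const t (ψ L)))
          rfl
        simpa using this x ⟨hx, le_rfl⟩
      have hψL : ψ L = 2 * π := by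
        have h2 : Tendsto ψ atTop (𝓝 (ψ L)) := by
          apply Tendsto.congr' _ tendsto_const_nhds
          filter_upwards [eventually_ge_atTop L] with y hy
          exact (hconst y hy).symm
        exact tendsto_nhds_unique h2 hlim
      intro x hx
      refine ⟨by rw [hconst x hx, hψL], ?_⟩
      rw [hfo x hx, hconst x hx, hψL]
      rw [show 2*π/2 = π by ring, Real.sin_pi]
      ring
    · exfalso
      obtain ⟨k, ε, hε, hmem⟩ := cand_exists hsb
      obtain ⟨ξb, hξb⟩ := φ₀_surj hmem
      set r := ξb + L with hr
      set g : ℝ → ℝ := fun y => 4*π*k + ε * φ₀ (-y + r) with hg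
      have hgL : g L = ψ L := by
        simp only [hg]
        rw [show -L + r = ξb by rw [hr]; ring, hξb]
        rcases hε with h | h <;> subst h <;> ring
      have hmatch : ∀ x, L ≤ x → ψ x = g x := by
        intro x hx
        have := ode_fwd (v := fun _ y => -(2 * Real.sin (y / 2))) (a := L) (b := x)
          (fun _ => lip_neg_sin_half) (f := ψ) (g := g)
          (fun t ht => by
            show HasDerivAt ψ (-(2 * Real.sin (ψ t / 2))) t
            rw [← hfo t ht.1]; exact (hdiff t).hasDerivAt)
          (fun t ht => cand_ode_neg hε r t)
          hgL.symm
        exact this x ⟨hx, le_rfl⟩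
      have hglim : Tendsto g atTop (𝓝 (4*π*k + ε * 0)) := by
        have h0 : Tendsto (fun y : ℝ => -y + r) atTop atBot :=
          tendsto_atBot_add_const_right _ r tendsto_neg_atTop_atBot
        have h1 : Tendsto (fun y : ℝ => φ₀ (-y + r)) atTop (𝓝 0) :=
          φ₀_tendsto_atBot.comp h0
        simpa using (h1.const_mul ε).const_add (4*π*k)
      have hlimeq : 4*π*k + ε * 0 = 2*π := by
        have h2 : Tendsto ψ atTop (𝓝 (4*π*k + ε * 0)) := by
          apply hglim.congr'
          filter_upwards [eventually_ge_atTop L] with y hy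
          exact (hmatch y hy).symm
        exact tendsto_nhds_unique h2 hlim
      have h4k : (4*k : ℝ) = 2 := by
        have : 4*π*k = 2*π := by linarith [hlimeq]
        have hπne : π ≠ 0 := ne_of_gt hπ
        field_simp at this
        nlinarith [this]
      have h4k' : (4*k : ℤ) = 2 := by exact_mod_cast h4k
      omega

lemma left_lim_eq' {f : ℝ → ℝ} {a c : ℝ} (hf : ContinuousAt f a)
    (h : ∀ᶠ x in 𝓝[<] a, f x = c) : f a = c := by
  have h1 : Tendsto f (𝓝[<] a) (𝓝 (f a)) := hf.continuousWithinAt.tendsto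
  have h2 : Tendsto f (𝓝[<] a) (𝓝 c) := by
    apply Tendsto.congr' _ tendsto_const_nhds
    filter_upwards [h] with x hx using hx.symm
  exact tendsto_nhds_unique h1 h2

lemma pinned_unique {L h xs : ℝ} (hL : 0 < L) (hh : h ∈ Set.Ioo (0:ℝ) 2)
    (hLh : L = (π - Real.arccos (1 - h)) / Real.sqrt (2 * h))
    (hxs : φ₀ (-L + xs) = Real.arccos (1 - h))
    {φ : ℝ → ℝ} (hφ : IsPinnedFluxon L 0 0 φ) : φ = PF L h xs := by
  have hπ := Real.pi_pos
  have hLL : -L < L := by linarith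
  set θ := Real.arccos (1 - h) with hθdef
  set sθ := Real.sqrt (2 * h) with hsθdef
  have hθ1 : 0 < θ := Real.arccos_pos.2 (by linarith [hh.1])
  have hθ2 : θ < π := by
    rcases lt_or_eq_of_le (Real.arccos_le_pi (1 - h)) with h2 | h2
    · exact h2
    · exfalso
      have h3 : Real.cos θ = 1 - h := Real.cos_arccos (by linarith [hh.2]) (by linarith [hh.1])
      have h2' : θ = π := by rw [hθdef]; exact h2
      rw [h2', Real.cos_pi] at h3
      linarith [hh.2]
  have hsθpos : 0 < sθ := Real.sqrt_pos.2 (by linarith [hh.1])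
  have hLsθ : L * sθ = π - θ := by rw [hLh]; field_simp
  have hval_L : φ₀ (L - xs) = 2 * π - θ := by
    have heq : L - xs = -(-L + xs) := by ring
    rw [heq, φ₀_reflect, hxs]
  obtain ⟨hC1, hODE, hbot, htop, hbot', htop'⟩ := hφ
  rw [Real.arcsin_zero] at hbot
  rw [Real.arcsin_zero, zero_add] at htop
  have hdiff : Differentiable ℝ φ := hC1.differentiable one_ne_zero
  have hdc : Continuous (deriv φ) := (contDiff_one_iff_deriv.1 hC1).2
  have hφc : Continuous φ := hdiff.continuous
  -- middle: deriv φ constant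
  have hmid : ∀ x ∈ Ioo (-L) L, HasDerivAt (deriv φ) 0 x := by
    intro x hx
    obtain ⟨φ'', hd, he⟩ := hODE x hx.1.ne' hx.2.ne
    have hD : Dfun L 0 x = 0 := by
      simp only [Dfun, if_pos (abs_lt.2 ⟨hx.1, hx.2⟩)]
    rw [hD] at he
    have : φ'' = 0 := by linarith
    rwa [this] at hd
  set s := deriv φ 0 with hsdef
  have hs_open : ∀ x ∈ Ioo (-L) L, deriv φ x = s := by
    intro x hx
    rcases le_total x 0 with hc | hc
    · exact (const_of_hasDerivAt_zero hc (fun t ht =>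
        hmid t ⟨lt_of_lt_of_le hx.1 ht.1, lt_of_le_of_lt ht.2 hL⟩)).symm
    · exact const_of_hasDerivAt_zero hc (fun t ht =>
        hmid t ⟨lt_of_lt_of_le (neg_lt_zero.2 hL) ht.1, lt_of_le_of_lt ht.2 hx.2⟩)
  have hs_mid : ∀ x ∈ Icc (-L) L, deriv φ x = s := by
    intro x hx
    rcases lt_or_eq_of_le hx.1 with h1 | h1
    · rcases lt_or_eq_of_le hx.2 with h2 | h2
      · exact hs_open x ⟨h1, h2⟩
      · subst h2
        apply left_lim_eq' hdc.continuousAt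
        filter_upwards [Ioo_mem_nhdsLT_of_mem (⟨hLL, le_rfl⟩ : x ∈ Ioc (-x) x)] with y hy
        exact hs_open y hy
    · subst h1
      apply right_lim_eq' hdc.continuousAt
      filter_upwards [Ioo_mem_nhdsGT_of_mem (⟨le_rfl, hLL⟩ : -L ∈ Ico (-L) L)] with y hy
      exact hs_open y hy
  have hs_mL : deriv φ (-L) = s := hs_mid _ ⟨le_rfl, hLL.le⟩
  have hs_L : deriv φ L = s := hs_mid _ ⟨hLL.le, le_rfl⟩
  have haff : ∀ x ∈ Icc (-L) L, φ x = φ (-L) + s * (x + L) := by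
    intro x hx
    have hg : ∀ t ∈ Icc (-L) x, HasDerivAt (fun y => φ y - s * y) 0 t := by
      intro t ht
      have h1 := (hdiff t).hasDerivAt.sub (((hasDerivAt_id t).const_mul s))
      have h2 : deriv φ t - s * 1 = 0 := by
        rw [hs_mid t ⟨ht.1, le_trans ht.2 hx.2⟩]; ring
      rwa [h2] at h1
    have := const_of_hasDerivAt_zero hx.1 hg
    linarith [this]
  -- right ray analysis
  have hode_r : ∀ x, L < x → HasDerivAt (deriv φ) (Real.sin (φ x)) x := by
    intro x hx
    obtain ⟨φ'', hd, he⟩ := hODE x (by intro hc; rw [hc] at hx; linarith) (ne_of_gt hx)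
    have hD : Dfun L 0 x = 1 := by
      have : ¬ (|x| < L) := by rw [abs_lt]; push_neg; intro h'; linarith
      simp only [Dfun, if_neg this]
    rw [hD] at he
    have : φ'' = Real.sin (φ x) := by linarith
    rwa [this] at hd
  have hR := ray_lemma hdiff hdc hode_r htop htop'
  -- left ray (reflected)
  set ψl : ℝ → ℝ := fun x => 2 * π - φ (-x) with hψl
  have hψl_d : ∀ x : ℝ, HasDerivAt ψl (deriv φ (-x)) x := by
    intro x
    have h1 : HasDerivAt (fun y : ℝ => φ (-y)) (-deriv φ (-x)) x := by
      have h0 := ((hdiff (-x)).hasDerivAt).comp x (hasDerivAt_neg x)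
      refine h0.congr_deriv (Eq.symm ?_)
      ring
    have h2 := h1.const_sub (2 * π)
    refine h2.congr_deriv (Eq.symm ?_)
    ring
  have hψl_diff : Differentiable ℝ ψl := fun x => (hψl_d x).differentiableAt
  have hψl_deriv : deriv ψl = fun x => deriv φ (-x) := funext fun x => (hψl_d x).deriv
  have hψl_dc : Continuous (deriv ψl) := by
    rw [hψl_deriv]; exact hdc.comp continuous_neg
  have hode_l : ∀ x, L < x → HasDerivAt (deriv ψl) (Real.sin (ψl x)) x := by
    intro x hx
    obtain ⟨φ'', hd, he⟩ := hODE (-x) (by intro hc; have := neg_injective hc; linarith)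
      (by intro hc; linarith [hx, hL, hc])
    have hD : Dfun L 0 (-x) = 1 := by
      have : ¬ (|(-x)| < L) := by rw [abs_lt]; push_neg; intro h'; linarith
      simp only [Dfun, if_neg this]
    rw [hD] at he
    have hφ'' : φ'' = Real.sin (φ (-x)) := by linarith
    rw [hφ''] at hd
    have h1 : HasDerivAt (fun y => deriv φ (-y)) (-Real.sin (φ (-x))) x := by
      have h0 := hd.comp x (hasDerivAt_neg x)
      refine h0.congr_deriv (Eq.symm ?_)
      ring
    have h2 : Real.sin (ψl x) = -Real.sin (φ (-x)) := by
      simp only [hψl]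
      rw [show 2*π - φ (-x) = -(φ (-x)) + (1:ℤ) * (2*π) by push_cast; ring,
        Real.sin_add_int_mul_two_pi, Real.sin_neg]
    rw [hψl_deriv, h2]
    exact h1
  have hψl_top : Tendsto ψl atTop (𝓝 (2 * π)) := by
    have h1 : Tendsto (fun x : ℝ => φ (-x)) atTop (𝓝 0) :=
      hbot.comp tendsto_neg_atTop_atBot
    have h2 := h1.const_sub (2 * π)
    simpa using h2
  have hψl_top' : Tendsto (deriv ψl) atTop (𝓝 0) := by
    rw [hψl_deriv]
    exact hbot'.comp tendsto_neg_atTop_atBot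
  have hLft := ray_lemma hψl_diff hψl_dc hode_l hψl_top hψl_top'
  -- translate
  set a := φ (-L) with hadef
  set b := φ L with hbdef
  have hab : b = a + 2 * L * s := by
    have := haff L ⟨hLL.le, le_rfl⟩
    rw [hbdef, this]; ring
  have hψlL : ψl L = 2 * π - a := by simp only [hψl, hadef]
  have hψl_dL : deriv ψl L = s := by rw [hψl_deriv]; exact hs_mL
  -- case analysis: left ray
  rcases hLft with hLc | ⟨rl, hLc⟩ | ⟨rl, hLc⟩
  · -- φ ≡ 0 on left: a = 0, s = 0, then contradiction with right ray
    exfalso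
    have ha0 : a = 0 := by
      have := (hLc L le_rfl).1
      rw [hψlL] at this
      linarith
    have hs0 : s = 0 := by
      have := (hLc L le_rfl).2
      rw [hψl_dL] at this
      linarith [this]
    have hb0 : b = 0 := by rw [hab, ha0, hs0]; ring
    rcases hR with hRc | ⟨rr, hRc⟩ | ⟨rr, hRc⟩
    · have := (hRc L le_rfl).1
      rw [← hbdef] at this
      rw [hb0] at this
      linarith
    · have := (hRc L le_rfl).1
      rw [← hbdef, hb0] at this
      linarith [φ₀_pos (L + rr)]
    · have := (hRc L le_rfl).1
      rw [← hbdef, hb0] at this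
      have := φ₀_lt (L + rr)
      linarith
  · -- main case setup from left
    have haval : a = 2 * π - φ₀ (L + rl) := by
      have := (hLc L le_rfl).1
      rw [hψlL] at this
      linarith
    have hsval : s = SGp (L + rl) := by
      have := (hLc L le_rfl).2
      rw [hψl_dL] at this
      exact this
    have hs_pos : 0 < s := by rw [hsval]; exact SGp_pos _
    have ha_mem : 0 < a ∧ a < 2 * π := by
      constructor
      · rw [haval]; linarith [φ₀_lt (L + rl)]
      · rw [haval]; linarith [φ₀_pos (L + rl)]
    have hsa : s = 2 * Real.sin (a / 2) := by
      rw [hsval, ← sin_half_φ₀ (L + rl)]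
      congr 1
      rw [show φ₀ (L + rl) = 2 * π - a by linarith [haval]]
      rw [show (2 * π - a)/2 = π - a/2 by ring, Real.sin_pi_sub]
    -- right ray cases
    rcases hR with hRc | ⟨rr, hRc⟩ | ⟨rr, hRc⟩
    · exfalso
      have := (hRc L le_rfl).2
      rw [hs_L] at this
      linarith
    · -- main case
      have hbval : b = φ₀ (L + rr) := (hRc L le_rfl).1
      have hsval' : s = SGp (L + rr) := by
        have := (hRc L le_rfl).2
        rw [hs_L] at this
        exact this
      have hb_mem : 0 < b ∧ b < 2 * π := by
        rw [hbval]; exact ⟨φ₀_pos _, φ₀_lt _⟩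
      have hsb : s = 2 * Real.sin (b / 2) := by
        rw [hsval', ← sin_half_φ₀ (L + rr), hbval]
      have haltb : a < b := by nlinarith [mul_pos hL hs_pos]
      -- b = 2π - a
      have hkey : b = 2 * π - a := by
        have heq : Real.sin (a/2) = Real.sin (b/2) := by linarith
        by_cases hA : a/2 ≤ π/2
        · by_cases hB : b/2 ≤ π/2
          · exfalso
            have := Real.injOn_sin ⟨by linarith [ha_mem.1], hA⟩ ⟨by linarith [hb_mem.1], hB⟩ heq
            linarith
          · push_neg at hB
            have heq2 : Real.sin (a/2) = Real.sin (π - b/2) := by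
              rw [Real.sin_pi_sub]; exact heq
            have := Real.injOn_sin ⟨by linarith [ha_mem.1], hA⟩
              ⟨by linarith, by linarith [hb_mem.2]⟩ heq2
            linarith
        · exfalso
          push_neg at hA
          have hB : π/2 < b/2 := by linarith
          have heq2 : Real.sin (π - a/2) = Real.sin (π - b/2) := by
            rw [Real.sin_pi_sub, Real.sin_pi_sub]; exact heq
          have := Real.injOn_sin ⟨by linarith, by linarith [ha_mem.2]⟩
            ⟨by linarith, by linarith [hb_mem.2]⟩ heq2
          linarith
      have haπ : a < π := by linarith
      have hLs : L * s = π - a := by linarith [hab, hkey]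
      -- identify h
      set h' := 1 - Real.cos a with hh'def
      have hcos1 : Real.cos a < 1 := by
        have := Real.strictAntiOn_cos (⟨le_rfl, hπ.le⟩ : (0:ℝ) ∈ Icc 0 π)
          ⟨ha_mem.1.le, haπ.le⟩ ha_mem.1
        rwa [Real.cos_zero] at this
      have hcosm1 : -1 < Real.cos a := by
        have := Real.strictAntiOn_cos ⟨ha_mem.1.le, haπ.le⟩
          (⟨hπ.le, le_rfl⟩ : π ∈ Icc 0 π) haπ
        rwa [Real.cos_pi] at this
      have hh'mem : h' ∈ Set.Ioo (0:ℝ) 2 := ⟨by simp only [hh'def]; linarith,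
        by simp only [hh'def]; linarith⟩
      have hs_eq : s = Real.sqrt (2 * h') := by
        have h2 : 2 * h' = s^2 := by
          have := sin_sq_half' a
          rw [hh'def]
          nlinarith
        rw [h2, Real.sqrt_sq hs_pos.le]
      have harc : Real.arccos (1 - h') = a := by
        rw [show 1 - h' = Real.cos a by rw [hh'def]; ring]
        exact Real.arccos_cos ha_mem.1.le haπ.le
      have hLh' : L = (π - Real.arccos (1 - h')) / Real.sqrt (2 * h') := by
        rw [harc, ← hs_eq]
        field_simp
        linarith
      obtain ⟨h₀, _, hun⟩ := part1 hL
      have hand1 := hun h ⟨hh, hLh⟩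
      have hand2 := hun h' ⟨hh'mem, hLh'⟩
      have hh'h : h' = h := by rw [hand1, hand2]
      have haθ : a = θ := by
        rw [hθdef, ← hh'h, harc]
      have hsθs : s = sθ := by
        rw [hsθdef, ← hh'h, hs_eq]
      -- identify shifts
      have hleft_shift : -rl = xs := by
        have h1 : φ₀ (-L - rl) = θ := by
          rw [show -L - rl = -(L + rl) by ring, φ₀_reflect]
          rw [show φ₀ (L + rl) = 2*π - a by linarith [haval]]
          rw [haθ]; ring
        have h2 : φ₀ (-L - rl) = φ₀ (-L + xs) := by rw [h1, hxs]
        have h3 := φ₀_strictMono.injective h2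
        linarith
      have hright_shift : rr = -xs := by
        have h1 : φ₀ (L + rr) = φ₀ (L - xs) := by
          rw [← hbval, hval_L, hkey, haθ]
        have h2 := φ₀_strictMono.injective h1
        linarith
      -- conclude
      funext x
      show φ x = PF L h xs x
      rcases le_or_gt x (-L) with hx | hx
      · have hform : φ x = 2 * π - φ₀ (-x + rl) := by
          have := (hLc (-x) (by linarith)).1
          simp only [hψl] at this
          rw [neg_neg] at this
          linarith
        have hform2 : φ x = φ₀ (x + xs) := by
          rw [hform, ← hleft_shift]
          rw [show x + -rl = -(-x + rl) by ring, φ₀_reflect]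
        simp only [PF, if_pos hx]
        exact hform2
      · rcases lt_or_ge x L with hx2 | hx2
        · have hform := haff x ⟨hx.le, hx2.le⟩
          simp only [PF, if_neg (not_le.2 hx), if_pos hx2]
          rw [hform, haθ, hsθs, ← hθdef]
          rw [show (π - θ)/L = sθ by rw [← hLsθ]; field_simp]
          linarith [hLsθ]
        · have hform : φ x = φ₀ (x + rr) := (hRc x hx2).1
          simp only [PF, if_neg (not_le.2 hx), if_neg (not_lt.2 hx2)]
          rw [hform, hright_shift]
          ring_nf
    · exfalso
      have := (hRc L le_rfl).2
      rw [hs_L] at this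
      linarith [SGp_pos (L + rr)]
  · -- left case III: s < 0
    exfalso
    have hsval : s = -SGp (L + rl) := by
      have := (hLc L le_rfl).2
      rw [hψl_dL] at this
      exact this
    have hs_neg : s < 0 := by rw [hsval]; linarith [SGp_pos (L + rl)]
    have haval : a = φ₀ (L + rl) - 2 * π := by
      have := (hLc L le_rfl).1
      rw [hψlL] at this
      linarith
    have ha_neg : a < 0 := by rw [haval]; linarith [φ₀_lt (L + rl)]
    rcases hR with hRc | ⟨rr, hRc⟩ | ⟨rr, hRc⟩
    · have := (hRc L le_rfl).2
      rw [hs_L] at this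
      linarith
    · have := (hRc L le_rfl).2
      rw [hs_L] at this
      linarith [SGp_pos (L + rr)]
    · have h1 := (hRc L le_rfl).1
      rw [← hbdef] at h1
      have h2 : b < 0 := by
        rw [hab]
        nlinarith
      have := φ₀_lt (L + rr)
      nlinarith [φ₀_pos (L + rr)]


end Aux

/-- For `γ = 0`, `d = 0` and any half-length `L > 0`: the equation
`L = (π − arccos(1−h))/√(2h)` has a unique solution `h ∈ (0,2)`, there is a unique
pinned fluxon for parameters `(L, 0, 0)`, and, for the shift `x*` with
`φ₀(−L + x*) = arccos(1−h)`, the explicit piecewise function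
(`φ₀(x+x*)` for `x ≤ −L`, linear with slope `(π − arccos(1−h))/L` through `(0, π)`
inside the defect, `φ₀(x−x*)` for `x ≥ L`) is a pinned fluxon for `(L, 0, 0)`. -/
theorem stmt2 (L : ℝ) (hL : 0 < L) :
    (∃! h : ℝ, h ∈ Set.Ioo (0 : ℝ) 2 ∧
        L = (π - Real.arccos (1 - h)) / Real.sqrt (2 * h)) ∧
    (∃! φ : ℝ → ℝ, IsPinnedFluxon L 0 0 φ) ∧
    (∀ h xs : ℝ, h ∈ Set.Ioo (0 : ℝ) 2 →
      L = (π - Real.arccos (1 - h)) / Real.sqrt (2 * h) →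
      φ₀ (-L + xs) = Real.arccos (1 - h) →
      IsPinnedFluxon L 0 0 (fun x =>
        if x ≤ -L then φ₀ (x + xs)
        else if x < L then π + ((π - Real.arccos (1 - h)) / L) * x
        else φ₀ (x - xs))) := by
  obtain ⟨h, ⟨hh, hLh⟩, huniq⟩ := part1 hL
  have hθmem : Real.arccos (1 - h) ∈ Set.Ioo 0 (2 * π) := by
    constructor
    · exact Real.arccos_pos.2 (by linarith [hh.1])
    · have h1 := Real.arccos_le_pi (1 - h)
      have := Real.pi_pos
      linarith
  obtain ⟨ξ, hξ⟩ := φ₀_surj hθmem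
  set xs := ξ + L with hxsdef
  have hxs : φ₀ (-L + xs) = Real.arccos (1 - h) := by
    rw [hxsdef, show -L + (ξ + L) = ξ by ring, hξ]
  refine ⟨⟨h, ⟨hh, hLh⟩, huniq⟩, ?_, ?_⟩
  · refine ⟨PF L h xs, explicit_pinned hL hh hLh hxs, ?_⟩
    intro φ hφ
    exact pinned_unique hL hh hLh hxs hφ
  · intro h' xs' hh' hLh' hxs'
    exact explicit_pinned hL hh' hLh' hxs'
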